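/- Let $M$ be a finite direct sum of matrix algebras with delta-form $\delta$, and let $H$ be a Hilbert-$M$-bimodule. Give $L^2(M)$ (i.e. $M$ with inner product $\langle x,y\rangle = \delta(y^*x)$) the bimodule structure $a \cdot [x] \cdot b = [a x \mu^{-1/2}(b)]$. Then the map $L^2(M) \otimes H \to H$, $[x] \otimes \xi \mapsto x \cdot \xi$, restricts to a unitary $M$-bimodular isomorphism $L^2(M) \boxtimes H \cong H$, where $\boxtimes$ is the relative tensor product. -/

import Mathlib

open Matrix ComplexOrder MulOpposite
open scoped TensorProduct

/-- The delta-form `δ(x) = ∑ i, d i · tr(x i * σ i)` as a linear functional on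
`M = ⨁ i, ℂ^{d i × d i}`. -/
noncomputable def deltaLPi {ι : Type} [Fintype ι] (d : ι → ℕ)
    (σ : ∀ i, Matrix (Fin (d i)) (Fin (d i)) ℂ) :
    (∀ i, Matrix (Fin (d i)) (Fin (d i)) ℂ) →ₗ[ℂ] ℂ :=
  ∑ i, (d i : ℂ) • ((Matrix.traceLinearMap (Fin (d i)) ℂ ℂ).comp
    ((LinearMap.mulRight ℂ (σ i)).comp
      (LinearMap.proj i : (∀ j, Matrix (Fin (d j)) (Fin (d j)) ℂ) →ₗ[ℂ] _)))

section MatrixHelpers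
variable {n : Type} [Fintype n] [DecidableEq n]

lemma mat1 (C : Matrix n n ℂ) (m k : n) :
    C * Matrix.single m k 1 = ∑ l, C l m • Matrix.single l k 1 := by
  ext a b
  have h : ∀ x : n, (C x m • Matrix.single x k (1:ℂ)) a b
      = if a = x ∧ b = k then C x m else 0 := by
    intro x
    simp [Matrix.single, Matrix.of_apply, Matrix.smul_apply, eq_comm]
  rw [Matrix.sum_apply]
  simp only [h]
  simp [Matrix.mul_apply, Matrix.single, Matrix.of_apply, ite_and,
    Finset.sum_ite_eq, Finset.sum_ite_eq', eq_comm]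

lemma mat1' (C : Matrix n n ℂ) (k l : n) :
    Matrix.single k l 1 * C = ∑ m, C l m • Matrix.single k m 1 := by
  ext a b
  have h : ∀ x : n, (C l x • Matrix.single k x (1:ℂ)) a b
      = if a = k ∧ b = x then C l x else 0 := by
    intro x
    simp [Matrix.single, Matrix.of_apply, Matrix.smul_apply, eq_comm]
  rw [Matrix.sum_apply]
  simp only [h]
  simp [Matrix.mul_apply, Matrix.single, Matrix.of_apply, ite_and,
    Finset.sum_ite_eq, Finset.sum_ite_eq', eq_comm]

lemma mat2 (C : Matrix n n ℂ) (k l l' k' : n) :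
    Matrix.single k l 1 * C * Matrix.single l' k' 1
      = C l l' • Matrix.single k k' 1 := by
  ext a b
  simp [Matrix.mul_apply, Matrix.single, Matrix.of_apply, Finset.sum_apply,
    ite_and, Finset.sum_ite_eq, Finset.sum_ite_eq']
  split_ifs <;> simp

lemma mat3 (C : Matrix n n ℂ) (q l : n) :
    (Matrix.single q l 1 * C).trace = C l q := by
  simp [Matrix.trace, Matrix.diag, Matrix.mul_apply, Matrix.single,
    Matrix.of_apply, ite_and, Finset.sum_ite_eq, Finset.sum_ite_eq']

lemma mat4 (a : Matrix n n ℂ) : ∑ k, ∑ l, (a k l) • Matrix.single k l (1:ℂ) = a := by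
  conv_rhs => rw [Matrix.matrix_eq_sum_single a]
  simp [Matrix.smul_single]

lemma stdMul (q p k l : n) :
    Matrix.single q p (1:ℂ) * Matrix.single k l 1 =
      if p = k then Matrix.single q l 1 else 0 := by
  split_ifs with h
  · subst h; simpa using Matrix.single_mul_single_same q p l (1:ℂ) 1
  · ext a b
    simp [Matrix.mul_apply, Matrix.single, Matrix.of_apply, ite_and,
      Finset.sum_ite_eq, Finset.sum_ite_eq', h]

lemma matH (k l : n) : (Matrix.single k l (1:ℂ))ᴴ = Matrix.single l k 1 := by
  ext a b
  simp [Matrix.conjTranspose_apply, Matrix.single, Matrix.of_apply, and_comm]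

lemma mat5 : (∑ k, Matrix.single k k (1:ℂ) : Matrix n n ℂ) = 1 := by
  ext a b
  rw [Matrix.sum_apply]
  simp [Matrix.single, Matrix.of_apply, Matrix.one_apply, ite_and,
    Finset.sum_ite_eq, Finset.sum_ite_eq', eq_comm]

lemma traceAB (A B : Matrix n n ℂ) : (A * B).trace = ∑ q, ∑ l, A q l * B l q := by
  simp [Matrix.trace, Matrix.diag, Matrix.mul_apply]

end MatrixHelpers

section Aux
open scoped TensorProduct ComplexOrder
variable {ι : Type} [Fintype ι] [DecidableEq ι] (d : ι → ℕ)
  (σ : ∀ i, Matrix (Fin (d i)) (Fin (d i)) ℂ)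
  {H : Type*} [NormedAddCommGroup H] [InnerProductSpace ℂ H] [CompleteSpace H]

/-- matrix units of the direct sum -/
noncomputable def EB (i : ι) (k l : Fin (d i)) : ∀ j, Matrix (Fin (d j)) (Fin (d j)) ℂ :=
  Pi.single i (Matrix.single k l 1)

/-- dual-ish elements -/
noncomputable def gB (i : ι) (k l : Fin (d i)) : ∀ j, Matrix (Fin (d j)) (Fin (d j)) ℂ :=
  Pi.single i ((d i : ℂ)⁻¹ • ((σ i)⁻¹ * Matrix.single l k 1))

/-- entry functional -/
noncomputable def coeffL (i : ι) (k l : Fin (d i)) :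
    (∀ j, Matrix (Fin (d j)) (Fin (d j)) ℂ) →ₗ[ℂ] ℂ where
  toFun a := a i k l
  map_add' := by intros; simp
  map_smul' := by intros; simp

noncomputable def QL (i : ι) (k l : Fin (d i)) :
    ((∀ j, Matrix (Fin (d j)) (Fin (d j)) ℂ) ⊗[ℂ] H) →ₗ[ℂ] H :=
  TensorProduct.lift ((LinearMap.lsmul ℂ H).comp (coeffL d i k l))

noncomputable def DL : ((∀ j, Matrix (Fin (d j)) (Fin (d j)) ℂ) ⊗[ℂ] H) →ₗ[ℂ] H :=
  TensorProduct.lift ((LinearMap.lsmul ℂ H).comp (deltaLPi d σ))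

@[simp] lemma QL_tmul (i : ι) (k l : Fin (d i)) (a : ∀ j, Matrix (Fin (d j)) (Fin (d j)) ℂ) (ξ : H) :
    QL d i k l (a ⊗ₜ[ℂ] ξ) = (a i k l) • ξ := rfl

@[simp] lemma DL_tmul (a : ∀ j, Matrix (Fin (d j)) (Fin (d j)) ℂ) (ξ : H) :
    DL d σ (a ⊗ₜ[ℂ] ξ) = (deltaLPi d σ a) • ξ := rfl

noncomputable def VL (lamH : (∀ i, Matrix (Fin (d i)) (Fin (d i)) ℂ) →⋆ₐ[ℂ] (H →L[ℂ] H)) :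
    H →ₗ[ℂ] ((∀ j, Matrix (Fin (d j)) (Fin (d j)) ℂ) ⊗[ℂ] H) :=
  ∑ i, ∑ k, ∑ l,
    (TensorProduct.mk ℂ _ H (EB d i k l)).comp (lamH (gB d σ i k l)).toLinearMap

lemma VL_apply (lamH : (∀ i, Matrix (Fin (d i)) (Fin (d i)) ℂ) →⋆ₐ[ℂ] (H →L[ℂ] H)) (ξ : H) :
    VL d σ lamH ξ = ∑ i, ∑ k : Fin (d i), ∑ l : Fin (d i),
      (EB d i k l) ⊗ₜ[ℂ] (lamH (gB d σ i k l) ξ) := by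
  simp [VL, LinearMap.sum_apply]

/-- expansion: every u equals the sum of matrix-unit coefficients -/
lemma expand (u : (∀ j, Matrix (Fin (d j)) (Fin (d j)) ℂ) ⊗[ℂ] H) :
    ∑ i, ∑ k : Fin (d i), ∑ l : Fin (d i), (EB d i k l) ⊗ₜ[ℂ] (QL d i k l u) = u := by
  induction u using TensorProduct.induction_on with
  | zero => simp
  | add x y hx hy => simp only [map_add, TensorProduct.tmul_add, Finset.sum_add_distrib, hx, hy]
  | tmul a ξ =>
    have key : ∀ i, ∀ k l : Fin (d i), (EB d i k l) ⊗ₜ[ℂ] ((a i k l) • ξ)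
        = ((a i k l) • EB d i k l) ⊗ₜ[ℂ] ξ := fun i k l => (TensorProduct.smul_tmul _ _ _).symm
    simp only [QL_tmul, key, ← TensorProduct.sum_tmul]
    congr 1
    funext j
    rw [Finset.sum_apply, Finset.sum_eq_single j]
    · simp only [Finset.sum_apply, Pi.smul_apply, EB, Pi.single_eq_same]
      exact mat4 (a j)
    · intro i _ hij
      simp [EB, Pi.single_eq_of_ne hij.symm]
    · simp

lemma single_mul' (i : ι) (m : Matrix (Fin (d i)) (Fin (d i)) ℂ)
    (a : ∀ j, Matrix (Fin (d j)) (Fin (d j)) ℂ) :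
    Pi.single i m * a = Pi.single i (m * a i) := by
  funext j
  by_cases h : j = i
  · subst h; simp
  · simp [Pi.single_eq_of_ne h]

lemma mul_single (i : ι) (m : Matrix (Fin (d i)) (Fin (d i)) ℂ)
    (a : ∀ j, Matrix (Fin (d j)) (Fin (d j)) ℂ) :
    a * Pi.single i m = Pi.single i (a i * m) := by
  funext j
  by_cases h : j = i
  · subst h; simp
  · simp [Pi.single_eq_of_ne h]

lemma single_mul_single_ne {i i' : ι} (h : i' ≠ i)
    (m : Matrix (Fin (d i')) (Fin (d i')) ℂ) (m' : Matrix (Fin (d i)) (Fin (d i)) ℂ) :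
    (Pi.single i' m : ∀ j, Matrix (Fin (d j)) (Fin (d j)) ℂ) * Pi.single i m' = 0 := by
  rw [single_mul']
  simp [Pi.single_eq_of_ne h]

lemma delta_apply (a : ∀ i, Matrix (Fin (d i)) (Fin (d i)) ℂ) :
    deltaLPi d σ a = ∑ i, (d i : ℂ) * (a i * σ i).trace := by
  simp [deltaLPi, LinearMap.sum_apply]

lemma delta_single (i : ι) (m : Matrix (Fin (d i)) (Fin (d i)) ℂ) :
    deltaLPi d σ (Pi.single i m) = (d i : ℂ) * (m * σ i).trace := by
  rw [delta_apply]
  rw [Finset.sum_eq_single i]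
  · simp
  · intro j _ hj; simp [Pi.single_eq_of_ne hj]
  · simp

lemma sum_single_one : (∑ i, Pi.single i (1 : Matrix (Fin (d i)) (Fin (d i)) ℂ)) = 1 :=
  Finset.univ_sum_single (1 : ∀ i, Matrix (Fin (d i)) (Fin (d i)) ℂ)

/-- push `Pi.single` through sums -/
lemma single_sum (i : ι) {γ : Type*} (s : Finset γ) (f : γ → Matrix (Fin (d i)) (Fin (d i)) ℂ) :
    (Pi.single i (∑ x ∈ s, f x) : ∀ j, Matrix (Fin (d j)) (Fin (d j)) ℂ)
      = ∑ x ∈ s, Pi.single i (f x) :=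
  map_sum (LinearMap.single ℂ (fun j => Matrix (Fin (d j)) (Fin (d j)) ℂ) i) f s

lemma trace_inv_diag_sum (i : ι) : ∑ l : Fin (d i), (σ i)⁻¹ l l = ((σ i)⁻¹).trace := rfl

/-- `∑ E·g = 1` -/
lemma sum_EB_gB (htr : ∀ i, ((σ i)⁻¹).trace = (d i : ℂ)) (hd : ∀ i, 0 < d i) :
    ∑ i, ∑ k : Fin (d i), ∑ l : Fin (d i), EB d i k l * gB d σ i k l = 1 := by
  have key : ∀ i, ∑ k : Fin (d i), ∑ l : Fin (d i), EB d i k l * gB d σ i k l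
      = Pi.single i (1 : Matrix (Fin (d i)) (Fin (d i)) ℂ) := by
    intro i
    have h1 : ∀ k l : Fin (d i), EB d i k l * gB d σ i k l
        = Pi.single i (((d i : ℂ)⁻¹ * ((σ i)⁻¹ l l)) • Matrix.single k k 1) := by
      intro k l
      rw [EB, gB, ← Pi.single_mul]
      congr 1
      rw [mul_smul_comm, ← mul_assoc, mat2, smul_smul]
    have hsc : ∑ l : Fin (d i), ((d i : ℂ)⁻¹ * ((σ i)⁻¹ l l)) = 1 := by
      rw [← Finset.mul_sum, trace_inv_diag_sum, htr i,
        inv_mul_cancel₀ (Nat.cast_ne_zero.mpr (hd i).ne')]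
    have h2 : ∀ k : Fin (d i), ∑ l : Fin (d i),
        (Pi.single i (((d i : ℂ)⁻¹ * ((σ i)⁻¹ l l)) • Matrix.single k k (1:ℂ)) :
          ∀ j, Matrix (Fin (d j)) (Fin (d j)) ℂ)
        = Pi.single i (Matrix.single k k (1:ℂ)) := by
      intro k
      rw [← single_sum, ← Finset.sum_smul, hsc, one_smul]
    simp only [h1, h2, ← single_sum, mat5]
  rw [Finset.sum_congr rfl (fun i _ => key i), _root_.sum_single_one]

lemma starEB (i : ι) (p q : Fin (d i)) : star (EB d i p q) = EB d i q p := by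
  rw [EB, EB, ← Pi.single_star]
  congr 1
  rw [Matrix.star_eq_conjTranspose, matH]

lemma star_sigma_inv (hσ : ∀ i, (σ i).PosDef) (i : ι) :
    star ((σ i)⁻¹) = (σ i)⁻¹ := by
  rw [Matrix.star_eq_conjTranspose, Matrix.conjTranspose_nonsing_inv, (hσ i).isHermitian.eq]

lemma stargB (hσ : ∀ i, (σ i).PosDef) (i : ι) (p q : Fin (d i)) :
    star (gB d σ i p q) = Pi.single i ((d i : ℂ)⁻¹ • (Matrix.single p q 1 * (σ i)⁻¹)) := by
  rw [gB, ← Pi.single_star]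
  congr 1
  rw [Matrix.star_eq_conjTranspose, Matrix.conjTranspose_smul, Matrix.conjTranspose_mul, matH,
    Matrix.conjTranspose_nonsing_inv, (hσ i).isHermitian.eq]
  congr 1
  simp

lemma gident (hσdet : ∀ i, IsUnit (σ i).det) (y : ∀ j, Matrix (Fin (d j)) (Fin (d j)) ℂ)
    (i : ι) (k m : Fin (d i)) :
    ∑ l : Fin (d i), ((σ i * y i * (σ i)⁻¹) l m) • gB d σ i k l = y * gB d σ i k m := by
  rw [gB, mul_single]
  have hmain : ∑ l : Fin (d i), ((σ i * y i * (σ i)⁻¹) l m)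
        • ((d i : ℂ)⁻¹ • ((σ i)⁻¹ * Matrix.single l k 1))
      = y i * ((d i : ℂ)⁻¹ • ((σ i)⁻¹ * Matrix.single m k 1)) := by
    have h1 : ∀ l : Fin (d i), ((σ i * y i * (σ i)⁻¹) l m)
          • ((d i : ℂ)⁻¹ • ((σ i)⁻¹ * Matrix.single l k 1))
        = (d i : ℂ)⁻¹ • ((σ i)⁻¹ * (((σ i * y i * (σ i)⁻¹) l m) • Matrix.single l k 1)) := by
      intro l
      rw [smul_comm, mul_smul_comm]
    rw [Finset.sum_congr rfl (fun l _ => h1 l), ← Finset.smul_sum, ← Finset.mul_sum, ← mat1]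
    have h2 : (σ i)⁻¹ * (σ i * y i * (σ i)⁻¹ * Matrix.single m k 1)
        = y i * ((σ i)⁻¹ * Matrix.single m k 1) := by
      simp only [← mul_assoc]
      rw [Matrix.nonsing_inv_mul _ (hσdet i), one_mul]
    rw [h2, mul_smul_comm]
  calc ∑ l : Fin (d i), ((σ i * y i * (σ i)⁻¹) l m) • gB d σ i k l
      = ∑ l : Fin (d i), (Pi.single i (((σ i * y i * (σ i)⁻¹) l m)
          • ((d i : ℂ)⁻¹ • ((σ i)⁻¹ * Matrix.single l k 1)))
          : ∀ j, Matrix (Fin (d j)) (Fin (d j)) ℂ) := by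
        refine Finset.sum_congr rfl (fun l _ => ?_)
        simp [gB, Pi.single_smul]
    _ = Pi.single i (y i * ((d i : ℂ)⁻¹ • ((σ i)⁻¹ * Matrix.single m k 1))) := by
        rw [← single_sum, hmain]

lemma DL_map_right (L : H →L[ℂ] H) (u : (∀ j, Matrix (Fin (d j)) (Fin (d j)) ℂ) ⊗[ℂ] H) :
    DL d σ (TensorProduct.map LinearMap.id L.toLinearMap u) = L (DL d σ u) := by
  induction u using TensorProduct.induction_on with
  | zero => simp
  | tmul a ξ => simp [TensorProduct.map_tmul]
  | add x y hx hy => simp only [map_add, hx, hy]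

lemma delta_a_single (a : ∀ j, Matrix (Fin (d j)) (Fin (d j)) ℂ) (i : ι)
    (m : Matrix (Fin (d i)) (Fin (d i)) ℂ) :
    deltaLPi d σ (a * Pi.single i m) = (d i : ℂ) * ((a i * m) * σ i).trace := by
  rw [mul_single, delta_single]

lemma DL_mulRight_g (hσdet : ∀ i, IsUnit (σ i).det) (hd : ∀ i, 0 < d i)
    (i : ι) (k l : Fin (d i)) (u : (∀ j, Matrix (Fin (d j)) (Fin (d j)) ℂ) ⊗[ℂ] H) :
    DL d σ (TensorProduct.map
        (LinearMap.mulRight ℂ (fun j => σ j * gB d σ i k l j * (σ j)⁻¹)) LinearMap.id u)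
      = QL d i k l u := by
  have hb : (fun j => σ j * gB d σ i k l j * (σ j)⁻¹)
      = Pi.single i ((d i : ℂ)⁻¹ • (Matrix.single l k 1 * (σ i)⁻¹)) := by
    funext j
    by_cases h : j = i
    · subst h
      simp only [gB, Pi.single_eq_same]
      rw [mul_smul_comm, smul_mul_assoc]
      congr 1
      rw [← mul_assoc, Matrix.mul_nonsing_inv _ (hσdet j), one_mul]
    · simp [gB, Pi.single_eq_of_ne h]
  rw [hb]
  induction u using TensorProduct.induction_on with
  | zero => simp
  | add x y hx hy => simp only [map_add, hx, hy]
  | tmul a ξ =>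
    simp only [TensorProduct.map_tmul, LinearMap.mulRight_apply, LinearMap.id_coe, id_eq,
      DL_tmul, QL_tmul]
    congr 1
    rw [delta_a_single]
    rw [mul_smul_comm, smul_mul_assoc, Matrix.trace_smul]
    have h3 : a i * (Matrix.single l k 1 * (σ i)⁻¹) * σ i
        = a i * Matrix.single l k 1 := by
      rw [mul_assoc, mul_assoc, Matrix.nonsing_inv_mul _ (hσdet i), mul_one]
    rw [h3, smul_eq_mul, ← mul_assoc, mul_inv_cancel₀ (Nat.cast_ne_zero.mpr (hd i).ne'),
      one_mul, Matrix.trace_mul_comm, mat3]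

/-- `T ∘ V = id` -/
lemma TVL (htr : ∀ i, ((σ i)⁻¹).trace = (d i : ℂ)) (hd : ∀ i, 0 < d i)
    (lamH : (∀ i, Matrix (Fin (d i)) (Fin (d i)) ℂ) →⋆ₐ[ℂ] (H →L[ℂ] H)) (ξ : H) :
    TensorProduct.lift ((ContinuousLinearMap.coeLM ℂ).comp lamH.toAlgHom.toLinearMap)
      (VL d σ lamH ξ) = ξ := by
  rw [VL_apply]
  simp only [map_sum]
  have h1 : ∀ i (k l : Fin (d i)),
      TensorProduct.lift ((ContinuousLinearMap.coeLM ℂ).comp lamH.toAlgHom.toLinearMap)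
        ((EB d i k l) ⊗ₜ[ℂ] (lamH (gB d σ i k l) ξ))
      = lamH (EB d i k l * gB d σ i k l) ξ := by
    intro i k l
    rw [TensorProduct.lift.tmul, _root_.map_mul, ContinuousLinearMap.mul_apply]
    rfl
  simp only [h1, ← ContinuousLinearMap.sum_apply, ← map_sum, sum_EB_gB d σ htr hd,
    _root_.map_one, ContinuousLinearMap.one_apply]

/-- `V ξ` satisfies the relative-tensor-product relation -/
lemma VmemS_aux (hσdet : ∀ i, IsUnit (σ i).det)
    (lamH : (∀ i, Matrix (Fin (d i)) (Fin (d i)) ℂ) →⋆ₐ[ℂ] (H →L[ℂ] H))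
    (y : ∀ j, Matrix (Fin (d j)) (Fin (d j)) ℂ) (ξ : H) :
    TensorProduct.map (LinearMap.mulRight ℂ (fun j => σ j * y j * (σ j)⁻¹)) LinearMap.id
        (VL d σ lamH ξ)
      = TensorProduct.map LinearMap.id (lamH y).toLinearMap (VL d σ lamH ξ) := by
  rw [VL_apply]
  simp only [map_sum, TensorProduct.map_tmul, LinearMap.mulRight_apply, LinearMap.id_coe, id_eq]
  refine Finset.sum_congr rfl (fun i _ => ?_)
  refine Finset.sum_congr rfl (fun k _ => ?_)
  -- LHS (inner over l): ∑_l (E·b) ⊗ lamH(g) ξ ; RHS : ∑_m E ⊗ lamH(y) (lamH g ξ)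
  have hleft : ∀ l : Fin (d i), (EB d i k l * fun j => σ j * y j * (σ j)⁻¹) ⊗ₜ[ℂ]
        (lamH (gB d σ i k l) ξ)
      = ∑ m : Fin (d i), ((σ i * y i * (σ i)⁻¹) l m)
          • ((EB d i k m) ⊗ₜ[ℂ] (lamH (gB d σ i k l) ξ)) := by
    intro l
    rw [EB, single_mul']
    have : (Matrix.single k l 1 * (σ i * y i * (σ i)⁻¹))
        = ∑ m, ((σ i * y i * (σ i)⁻¹) l m) • Matrix.single k m 1 := mat1' _ k l
    rw [this, single_sum, TensorProduct.sum_tmul]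
    refine Finset.sum_congr rfl (fun m _ => ?_)
    rw [Pi.single_smul, TensorProduct.smul_tmul', EB]
  rw [Finset.sum_congr rfl (fun l _ => hleft l), Finset.sum_comm]
  refine Finset.sum_congr rfl (fun m _ => ?_)
  calc ∑ l : Fin (d i), ((σ i * y i * (σ i)⁻¹) l m)
          • ((EB d i k m) ⊗ₜ[ℂ] (lamH (gB d σ i k l) ξ))
      = (EB d i k m) ⊗ₜ[ℂ] (∑ l : Fin (d i),
          ((σ i * y i * (σ i)⁻¹) l m) • (lamH (gB d σ i k l) ξ)) := by
        rw [TensorProduct.tmul_sum]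
        refine Finset.sum_congr rfl (fun l _ => ?_)
        rw [TensorProduct.tmul_smul]
    _ = (EB d i k m) ⊗ₜ[ℂ] ((lamH y) ((lamH (gB d σ i k m)) ξ)) := by
        congr 1
        have h4 : ∀ l : Fin (d i), ((σ i * y i * (σ i)⁻¹) l m) • (lamH (gB d σ i k l) ξ)
            = lamH (((σ i * y i * (σ i)⁻¹) l m) • gB d σ i k l) ξ := by
          intro l
          rw [_root_.map_smul, ContinuousLinearMap.smul_apply]
        rw [Finset.sum_congr rfl (fun l _ => h4 l), ← ContinuousLinearMap.sum_apply, ← map_sum,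
          gident d σ hσdet y i k m, _root_.map_mul, ContinuousLinearMap.mul_apply]


lemma Ksum (hσ : ∀ i, (σ i).PosDef) (hσdet : ∀ i, IsUnit (σ i).det)
    (htr : ∀ i, ((σ i)⁻¹).trace = (d i : ℂ)) (hd : ∀ i, 0 < d i) :
    ∑ i, ∑ k : Fin (d i), ∑ l : Fin (d i), ∑ i', ∑ p : Fin (d i'), ∑ q : Fin (d i'),
      (deltaLPi d σ (star (EB d i' p q) * EB d i k l)) • (star (gB d σ i' p q) * gB d σ i k l)
      = 1 := by
  have hd0 : ∀ i, (d i : ℂ) ≠ 0 := fun i => Nat.cast_ne_zero.mpr (hd i).ne'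
  have block : ∀ i (k l : Fin (d i)),
      (∑ i', ∑ p : Fin (d i'), ∑ q : Fin (d i'),
        (deltaLPi d σ (star (EB d i' p q) * EB d i k l)) • (star (gB d σ i' p q) * gB d σ i k l))
      = ∑ q : Fin (d i),
          (((d i : ℂ) * ((σ i) l q)) * (((d i : ℂ)⁻¹ * (d i : ℂ)⁻¹)
              * (((σ i)⁻¹ * (σ i)⁻¹) q l)))
            • (Pi.single i (Matrix.single k k 1) : ∀ j, Matrix (Fin (d j)) (Fin (d j)) ℂ) := by
    intro i k l
    rw [Finset.sum_eq_single i]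
    · rw [Finset.sum_eq_single k]
      · refine Finset.sum_congr rfl (fun q _ => ?_)
        rw [starEB, stargB d σ hσ]
        have h1 : EB d i q k * EB d i k l
            = (Pi.single i (Matrix.single q l 1) : ∀ j, Matrix (Fin (d j)) (Fin (d j)) ℂ) := by
          rw [EB, EB, ← Pi.single_mul]
          congr 1
          simpa using Matrix.single_mul_single_same q k l (1:ℂ) 1
        have h2 : (Pi.single i ((d i : ℂ)⁻¹ • (Matrix.single k q 1 * (σ i)⁻¹)) :
              ∀ j, Matrix (Fin (d j)) (Fin (d j)) ℂ) * gB d σ i k l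
            = Pi.single i ((((d i : ℂ)⁻¹ * (d i : ℂ)⁻¹) * (((σ i)⁻¹ * (σ i)⁻¹) q l))
                • Matrix.single k k 1) := by
          rw [gB, ← Pi.single_mul]
          congr 1
          rw [smul_mul_smul_comm]
          have h3 : (Matrix.single k q 1 * (σ i)⁻¹) * ((σ i)⁻¹ * Matrix.single l k 1)
              = Matrix.single k q 1 * ((σ i)⁻¹ * (σ i)⁻¹) * Matrix.single l k 1 := by
            simp only [mul_assoc]
          rw [h3, mat2, smul_smul]
        rw [h1, h2, delta_single, mat3, Pi.single_smul, smul_smul]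
      · intro p _ hp
        have hz : ∀ q : Fin (d i),
            (deltaLPi d σ (star (EB d i p q) * EB d i k l)) • (star (gB d σ i p q) * gB d σ i k l)
            = 0 := by
          intro q
          rw [starEB, EB, EB, ← Pi.single_mul, stdMul, if_neg hp]
          simp
        simp [hz]
      · intro h; exact absurd (Finset.mem_univ k) h
    · intro i' _ hii
      have hz : ∀ (p q : Fin (d i')),
          (deltaLPi d σ (star (EB d i' p q) * EB d i k l)) • (star (gB d σ i' p q) * gB d σ i k l)
          = 0 := by
        intro p q
        rw [starEB, EB, EB, single_mul_single_ne d hii]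
        simp
      simp [hz]
    · intro h; exact absurd (Finset.mem_univ i) h
  have hd0' := hd0
  have hone : ∀ i, ∑ l : Fin (d i), ∑ q : Fin (d i),
      (((d i : ℂ) * ((σ i) l q)) * (((d i : ℂ)⁻¹ * (d i : ℂ)⁻¹)
        * (((σ i)⁻¹ * (σ i)⁻¹) q l))) = 1 := by
    intro i
    have heach : ∀ l q : Fin (d i),
        (((d i : ℂ) * ((σ i) l q)) * (((d i : ℂ)⁻¹ * (d i : ℂ)⁻¹)
          * (((σ i)⁻¹ * (σ i)⁻¹) q l)))
        = (d i : ℂ)⁻¹ * ((σ i) l q * ((σ i)⁻¹ * (σ i)⁻¹) q l) := by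
      intro l q
      have h5 : ((d i : ℂ) * ((σ i) l q)) * (((d i : ℂ)⁻¹ * (d i : ℂ)⁻¹)
            * (((σ i)⁻¹ * (σ i)⁻¹) q l))
          = ((d i : ℂ) * (d i : ℂ)⁻¹) * ((d i : ℂ)⁻¹
            * ((σ i) l q * ((σ i)⁻¹ * (σ i)⁻¹) q l)) := by ring
      rw [h5, mul_inv_cancel₀ (hd0 i), one_mul]
    rw [Finset.sum_congr rfl fun l _ => Finset.sum_congr rfl fun q _ => heach l q]
    rw [show (∑ l : Fin (d i), ∑ q : Fin (d i),
        (d i : ℂ)⁻¹ * ((σ i) l q * ((σ i)⁻¹ * (σ i)⁻¹) q l))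
        = (d i : ℂ)⁻¹ * ∑ l : Fin (d i), ∑ q : Fin (d i),
          ((σ i) l q * ((σ i)⁻¹ * (σ i)⁻¹) q l) from by
      rw [Finset.mul_sum]
      exact Finset.sum_congr rfl fun l _ => (Finset.mul_sum _ _ _).symm]
    rw [← traceAB]
    have h6 : σ i * ((σ i)⁻¹ * (σ i)⁻¹) = (σ i)⁻¹ := by
      rw [← mul_assoc, Matrix.mul_nonsing_inv _ (hσdet i), one_mul]
    rw [h6, htr i, inv_mul_cancel₀ (hd0 i)]
  calc ∑ i, ∑ k : Fin (d i), ∑ l : Fin (d i), ∑ i', ∑ p : Fin (d i'), ∑ q : Fin (d i'),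
      (deltaLPi d σ (star (EB d i' p q) * EB d i k l)) • (star (gB d σ i' p q) * gB d σ i k l)
      = ∑ i, ∑ k : Fin (d i),
          (Pi.single i (Matrix.single k k 1) : ∀ j, Matrix (Fin (d j)) (Fin (d j)) ℂ) := by
        refine Finset.sum_congr rfl fun i _ => Finset.sum_congr rfl fun k _ => ?_
        rw [Finset.sum_congr rfl fun l _ => block i k l]
        rw [show (∑ l : Fin (d i), ∑ q : Fin (d i),
            (((d i : ℂ) * ((σ i) l q)) * (((d i : ℂ)⁻¹ * (d i : ℂ)⁻¹)
              * (((σ i)⁻¹ * (σ i)⁻¹) q l)))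
              • (Pi.single i (Matrix.single k k 1) : ∀ j, Matrix (Fin (d j)) (Fin (d j)) ℂ))
            = (∑ l : Fin (d i), ∑ q : Fin (d i),
              (((d i : ℂ) * ((σ i) l q)) * (((d i : ℂ)⁻¹ * (d i : ℂ)⁻¹)
                * (((σ i)⁻¹ * (σ i)⁻¹) q l))))
              • (Pi.single i (Matrix.single k k 1) : ∀ j, Matrix (Fin (d j)) (Fin (d j)) ℂ)
            from by
          rw [Finset.sum_smul]
          exact Finset.sum_congr rfl fun l _ => (Finset.sum_smul).symm]
        rw [hone i, one_smul]
    _ = 1 := by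
        rw [Finset.sum_congr rfl fun i _ => (single_sum d i Finset.univ _).symm]
        simp only [mat5]
        exact sum_single_one d


lemma Tlift_tmul (lamH : (∀ i, Matrix (Fin (d i)) (Fin (d i)) ℂ) →⋆ₐ[ℂ] (H →L[ℂ] H))
    (a : ∀ j, Matrix (Fin (d j)) (Fin (d j)) ℂ) (ξ : H) :
    TensorProduct.lift ((ContinuousLinearMap.coeLM ℂ).comp lamH.toAlgHom.toLinearMap)
      (a ⊗ₜ[ℂ] ξ) = lamH a ξ := rfl

end Aux


/-- `L²(M)` is `M` with inner product `⟨x,y⟩ = δ(y^* x)` and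
bimodule structure `a · x · b = a x μ^{-1/2}(b)`.  The multiplication map
`L²(M) ⊗ H → H`, `x ⊗ ξ ↦ x · ξ`, restricted to the relative tensor product
`L²(M) ⊠ H` (the joint kernel condition below) is a unitary `M`-bimodular
isomorphism onto `H`. -/
theorem stmt10 {ι : Type} [Fintype ι] (d : ι → ℕ) (hd : ∀ i, 0 < d i)
    (σ τ : ∀ i, Matrix (Fin (d i)) (Fin (d i)) ℂ)
    (hσ : ∀ i, (σ i).PosDef) (htr : ∀ i, ((σ i)⁻¹).trace = (d i : ℂ))
    (hτ : ∀ i, (τ i).PosDef) (hττ : ∀ i, τ i * τ i = σ i)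
    {H : Type*} [NormedAddCommGroup H] [InnerProductSpace ℂ H] [CompleteSpace H]
    (lamH : (∀ i, Matrix (Fin (d i)) (Fin (d i)) ℂ) →⋆ₐ[ℂ] (H →L[ℂ] H))
    (rhoH : (∀ i, Matrix (Fin (d i)) (Fin (d i)) ℂ)ᵐᵒᵖ →⋆ₐ[ℂ] (H →L[ℂ] H))
    (hHcomm : ∀ x y, Commute (lamH x) (rhoH y))
    (μhalf μneghalf : (∀ i, Matrix (Fin (d i)) (Fin (d i)) ℂ) →
      (∀ i, Matrix (Fin (d i)) (Fin (d i)) ℂ))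
    (hμhalf : ∀ x i, μhalf x i = (τ i)⁻¹ * x i * τ i)
    (hμneghalf : ∀ x i, μneghalf x i = τ i * x i * (τ i)⁻¹)
    -- the relative tensor product `L²(M) ⊠ H` inside `L²(M) ⊗ H`
    (S : Submodule ℂ ((∀ i, Matrix (Fin (d i)) (Fin (d i)) ℂ) ⊗[ℂ] H))
    (hS : S = ⨅ x : ∀ i, Matrix (Fin (d i)) (Fin (d i)) ℂ,
      LinearMap.ker (TensorProduct.map (LinearMap.mulRight ℂ (μneghalf x)) LinearMap.id
        - TensorProduct.map LinearMap.id (lamH (μhalf x)).toLinearMap))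
    -- the map `x ⊗ ξ ↦ x · ξ`
    (T : ((∀ i, Matrix (Fin (d i)) (Fin (d i)) ℂ) ⊗[ℂ] H) →ₗ[ℂ] H)
    (hT : T = TensorProduct.lift
      ((ContinuousLinearMap.coeLM ℂ).comp lamH.toAlgHom.toLinearMap))
    -- the tensor product inner product on `L²(M) ⊗ H`
    (ip : ((∀ i, Matrix (Fin (d i)) (Fin (d i)) ℂ) ⊗[ℂ] H) →
      ((∀ i, Matrix (Fin (d i)) (Fin (d i)) ℂ) ⊗[ℂ] H) → ℂ)
    (hip_lin : ∀ v, IsLinearMap ℂ (fun u => ip u v))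
    (hip_add : ∀ u v w, ip u (v + w) = ip u v + ip u w)
    (hip_smul : ∀ (c : ℂ) u v, ip u (c • v) = (starRingEnd ℂ) c * ip u v)
    (hip_pure : ∀ (a c : ∀ i, Matrix (Fin (d i)) (Fin (d i)) ℂ) (ξ η : H),
      ip (a ⊗ₜ[ℂ] ξ) (c ⊗ₜ[ℂ] η) = deltaLPi d σ (star c * a) * (inner ℂ η ξ : ℂ)) :
    -- `T` is `M`-bimodular for the bimodule structures involved
    (∀ (a : ∀ i, Matrix (Fin (d i)) (Fin (d i)) ℂ)
        (u : (∀ i, Matrix (Fin (d i)) (Fin (d i)) ℂ) ⊗[ℂ] H),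
      T (TensorProduct.map (LinearMap.mulLeft ℂ a) LinearMap.id u) = lamH a (T u)) ∧
    (∀ (x : (∀ i, Matrix (Fin (d i)) (Fin (d i)) ℂ)ᵐᵒᵖ)
        (u : (∀ i, Matrix (Fin (d i)) (Fin (d i)) ℂ) ⊗[ℂ] H),
      T (TensorProduct.map LinearMap.id (rhoH x).toLinearMap u) = rhoH x (T u)) ∧
    -- the restriction of `T` to `S` is bijective onto `H`
    Function.Bijective (T.domRestrict S) ∧
    -- and it is isometric: `⟪T u, T v⟫ = ⟪u, v⟫` for `u, v ∈ S`
    (∀ u v : (∀ i, Matrix (Fin (d i)) (Fin (d i)) ℂ) ⊗[ℂ] H,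
      u ∈ S → v ∈ S → (inner ℂ (T u) (T v) : ℂ) = ip v u) := by
  classical
  subst hT
  have hd0 : ∀ i, (d i : ℂ) ≠ 0 := fun i => Nat.cast_ne_zero.mpr (hd i).ne'
  have hσdet : ∀ i, IsUnit (σ i).det := fun i => isUnit_iff_ne_zero.mpr (hσ i).det_pos.ne'
  have hτdet : ∀ i, IsUnit (τ i).det := fun i => isUnit_iff_ne_zero.mpr (hτ i).det_pos.ne'
  have hτ1 : ∀ j, τ j * (τ j)⁻¹ = 1 := fun j => Matrix.mul_nonsing_inv _ (hτdet j)
  have hτ1' : ∀ j, (τ j)⁻¹ * τ j = 1 := fun j => Matrix.nonsing_inv_mul _ (hτdet j)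
  -- μ relations
  have hμrel : ∀ x, μneghalf x = fun j => σ j * μhalf x j * (σ j)⁻¹ := by
    intro x
    funext j
    rw [hμneghalf, hμhalf, ← hττ j, Matrix.mul_inv_rev]
    have hassoc : τ j * τ j * ((τ j)⁻¹ * x j * τ j) * ((τ j)⁻¹ * (τ j)⁻¹)
        = τ j * (τ j * (τ j)⁻¹) * x j * (τ j * (τ j)⁻¹) * (τ j)⁻¹ := by
      simp only [mul_assoc]
    rw [hassoc, hτ1 j]
    simp
  have memS_iff : ∀ u : (∀ i, Matrix (Fin (d i)) (Fin (d i)) ℂ) ⊗[ℂ] H,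
      u ∈ S ↔ ∀ x, TensorProduct.map (LinearMap.mulRight ℂ (μneghalf x)) LinearMap.id u
        = TensorProduct.map LinearMap.id (lamH (μhalf x)).toLinearMap u := by
    intro u
    rw [hS]
    simp only [Submodule.mem_iInf, LinearMap.mem_ker, LinearMap.sub_apply, sub_eq_zero]
  -- key relation for elements of S
  have KeyQ : ∀ u ∈ S, ∀ i (k l : Fin (d i)),
      QL d i k l u = lamH (gB d σ i k l) (DL d σ u) := by
    intro u hu i k l
    have hx := (memS_iff u).mp hu (fun j => τ j * gB d σ i k l j * (τ j)⁻¹)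
    have hhalf : μhalf (fun j => τ j * gB d σ i k l j * (τ j)⁻¹) = gB d σ i k l := by
      funext j
      rw [hμhalf]
      have hassoc : (τ j)⁻¹ * (τ j * gB d σ i k l j * (τ j)⁻¹) * τ j
          = ((τ j)⁻¹ * τ j) * gB d σ i k l j * ((τ j)⁻¹ * τ j) := by
        simp only [mul_assoc]
      rw [hassoc, hτ1' j]
      simp
    have hneg : μneghalf (fun j => τ j * gB d σ i k l j * (τ j)⁻¹)
        = fun j => σ j * gB d σ i k l j * (σ j)⁻¹ := by
      rw [hμrel, hhalf]
    rw [hneg, hhalf] at hx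
    have h2 := congrArg (DL d σ) hx
    rw [DL_mulRight_g d σ hσdet hd i k l u, DL_map_right d σ (lamH (gB d σ i k l)) u] at h2
    exact h2
  have uVD : ∀ u ∈ S, VL d σ lamH (DL d σ u) = u := by
    intro u hu
    conv_rhs => rw [← expand d u]
    rw [VL_apply]
    exact Finset.sum_congr rfl fun i _ => Finset.sum_congr rfl fun k _ =>
      Finset.sum_congr rfl fun l _ => by rw [KeyQ u hu i k l]
  have memV : ∀ ξ : H, VL d σ lamH ξ ∈ S := by
    intro ξ
    rw [memS_iff]
    intro x
    rw [hμrel x]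
    exact VmemS_aux d σ hσdet lamH (μhalf x) ξ
  have TS_eq : ∀ u ∈ S,
      TensorProduct.lift ((ContinuousLinearMap.coeLM ℂ).comp lamH.toAlgHom.toLinearMap) u
        = DL d σ u := by
    intro u hu
    conv_lhs => rw [← uVD u hu]
    exact TVL d σ htr hd lamH (DL d σ u)
  -- inner product machinery
  have hip_zero : ∀ w, ip w 0 = 0 := by
    intro w
    have h := hip_smul 0 w 0
    simpa using h
  have hip_sum_left : ∀ {γ : Type} (s : Finset γ)
      (f : γ → (∀ i, Matrix (Fin (d i)) (Fin (d i)) ℂ) ⊗[ℂ] H) (w),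
      ip (∑ j ∈ s, f j) w = ∑ j ∈ s, ip (f j) w := by
    intro γ s f w
    exact map_sum (IsLinearMap.mk' _ (hip_lin w)) f s
  have hip_sum_right : ∀ (w) {γ : Type} (s : Finset γ)
      (f : γ → (∀ i, Matrix (Fin (d i)) (Fin (d i)) ℂ) ⊗[ℂ] H),
      ip w (∑ j ∈ s, f j) = ∑ j ∈ s, ip w (f j) := by
    intro w γ s f
    induction s using Finset.induction_on with
    | empty => simpa using hip_zero w
    | insert _ _ ha ih => rw [Finset.sum_insert ha, Finset.sum_insert ha, hip_add, ih]
  have ipVV : ∀ ξ η : H, ip (VL d σ lamH η) (VL d σ lamH ξ) = (inner ℂ ξ η : ℂ) := by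
    intro ξ η
    have hadj : ∀ gm gj : ∀ i, Matrix (Fin (d i)) (Fin (d i)) ℂ,
        (inner ℂ (lamH gm ξ) (lamH gj η) : ℂ) = inner ℂ ξ (lamH (star gm * gj) η) := by
      intro gm gj
      calc (inner ℂ (lamH gm ξ) (lamH gj η) : ℂ)
          = inner ℂ ξ ((ContinuousLinearMap.adjoint (lamH gm)) (lamH gj η)) :=
            (ContinuousLinearMap.adjoint_inner_right _ _ _).symm
        _ = inner ℂ ξ ((lamH (star gm)) (lamH gj η)) := by
            rw [← ContinuousLinearMap.star_eq_adjoint, ← map_star]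
        _ = inner ℂ ξ (lamH (star gm * gj) η) := by
            rw [← ContinuousLinearMap.mul_apply, ← _root_.map_mul]
    have main : ip (VL d σ lamH η) (VL d σ lamH ξ)
        = ∑ i, ∑ k : Fin (d i), ∑ l : Fin (d i), ∑ i', ∑ p : Fin (d i'), ∑ q : Fin (d i'),
            ip ((EB d i k l) ⊗ₜ[ℂ] (lamH (gB d σ i k l) η))
               ((EB d i' p q) ⊗ₜ[ℂ] (lamH (gB d σ i' p q) ξ)) := by
      rw [VL_apply, VL_apply, hip_sum_left]
      refine Finset.sum_congr rfl fun i _ => ?_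
      rw [hip_sum_left]
      refine Finset.sum_congr rfl fun k _ => ?_
      rw [hip_sum_left]
      refine Finset.sum_congr rfl fun l _ => ?_
      rw [hip_sum_right]
      refine Finset.sum_congr rfl fun i' _ => ?_
      rw [hip_sum_right]
      refine Finset.sum_congr rfl fun p _ => ?_
      rw [hip_sum_right]
    rw [main]
    have hterm : ∀ i (k l : Fin (d i)) i' (p q : Fin (d i')),
        ip ((EB d i k l) ⊗ₜ[ℂ] (lamH (gB d σ i k l) η))
           ((EB d i' p q) ⊗ₜ[ℂ] (lamH (gB d σ i' p q) ξ))
        = inner ℂ ξ ((deltaLPi d σ (star (EB d i' p q) * EB d i k l))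
            • (lamH (star (gB d σ i' p q) * gB d σ i k l) η)) := by
      intro i k l i' p q
      rw [hip_pure, hadj, inner_smul_right]
    simp only [hterm]
    have hsm : ∀ (c : ℂ) (w : ∀ i, Matrix (Fin (d i)) (Fin (d i)) ℂ),
        c • (lamH w η) = lamH (c • w) η := by
      intro c w
      rw [_root_.map_smul, ContinuousLinearMap.smul_apply]
    have hsum : ∀ {γ : Type} (s : Finset γ) (f : γ → ∀ i, Matrix (Fin (d i)) (Fin (d i)) ℂ),
        ∑ j ∈ s, lamH (f j) η = lamH (∑ j ∈ s, f j) η := by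
      intro γ s f
      rw [← ContinuousLinearMap.sum_apply, ← map_sum]
    simp only [hsm, hsum, ← inner_sum]
    rw [Ksum d σ hσ hσdet htr hd, _root_.map_one, ContinuousLinearMap.one_apply]
  refine ⟨?_, ?_, ?_, ?_⟩
  · -- left bimodularity
    intro a u
    induction u using TensorProduct.induction_on with
    | zero => simp
    | tmul x ξ =>
      rw [TensorProduct.map_tmul, Tlift_tmul, Tlift_tmul]
      simp only [LinearMap.mulLeft_apply, LinearMap.id_coe, id_eq]
      rw [_root_.map_mul, ContinuousLinearMap.mul_apply]
    | add u v hu hv => simp only [map_add, hu, hv]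
  · -- right bimodularity
    intro x u
    induction u using TensorProduct.induction_on with
    | zero => simp
    | tmul y ξ =>
      rw [TensorProduct.map_tmul, Tlift_tmul]
      simp only [LinearMap.id_coe, id_eq, ContinuousLinearMap.coe_coe]
      rw [Tlift_tmul]
      have h := hHcomm y x
      calc lamH y ((rhoH x) ξ) = (lamH y * rhoH x) ξ := rfl
        _ = (rhoH x * lamH y) ξ := by rw [h]
        _ = rhoH x (lamH y ξ) := rfl
    | add u v hu hv => simp only [map_add, hu, hv]
  · -- bijectivity
    constructor
    · intro u v huv
      have h1 : TensorProduct.lift ((ContinuousLinearMap.coeLM ℂ).comp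
          lamH.toAlgHom.toLinearMap) u.1 = TensorProduct.lift ((ContinuousLinearMap.coeLM ℂ).comp
          lamH.toAlgHom.toLinearMap) v.1 := huv
      have h2 : DL d σ u.1 = DL d σ v.1 := by
        rw [← TS_eq u.1 u.2, ← TS_eq v.1 v.2]
        exact h1
      have h3 : (u : (∀ i, Matrix (Fin (d i)) (Fin (d i)) ℂ) ⊗[ℂ] H) = v := by
        rw [← uVD u.1 u.2, ← uVD v.1 v.2, h2]
      exact Subtype.ext h3
    · intro ξ
      exact ⟨⟨VL d σ lamH ξ, memV ξ⟩, TVL d σ htr hd lamH ξ⟩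
  · -- isometry
    intro u v hu hv
    rw [TS_eq u hu, TS_eq v hv]
    conv_rhs => rw [← uVD v hv, ← uVD u hu]
    exact (ipVV (DL d σ u) (DL d σ v)).symm
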